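/- Define layer stresses for 1 ≤ α ≤ N by h_α Σ_{xx,α} = 2μ ( h_α ∂_x u_α − ( ∂_x z_{α+1/2} · (u_{α+1} − u_α)/2 + ∂_x z_{α−1/2} · (u_α − u_{α−1})/2 ) ) and h_α Σ_{zx,α} = μ ( h_α ∂_x w_α + h_α ∂_x z_α ∂_x u_α + ((u_{α+1} − u_α)/2)(1 − (∂_x z_{α+1/2})²) + ((u_α − u_{α−1})/2)(1 − (∂_x z_{α−1/2})²) ), and interface stresses by the centered averages Σ_{ab,α+1/2} = ( Σ_{ab,α+1} + Σ_{ab,α} )/2. Then the dissipation functional R_E = − Σ_{α=1}^N [ 2 ∂_x u_α · h_α Σ_{xx,α} − 2 Σ_{xx,α+1/2} (u_{α+1} − u_α) ∂_x z_{α+1/2} + ( ∂_x w_α + ∂_x z_α ∂_x u_α ) h_α Σ_{zx,α} + Σ_{zx,α+1/2} (u_{α+1} − u_α)(1 − (∂_x z_{α+1/2})²) ] − (κ/c_b³) u_1² equals − Σ_{α=1}^N ( h_α/μ )( Σ_{xx,α}² + Σ_{zx,α}² ) − (κ/c_b³) u_1², and hence R_E ≤ 0 when μ > 0, κ ≥ 0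 and H > 0. -/

import Mathlib

/-- ∂/∂x of a function of (x,t). -/
noncomputable def pdx (f : ℝ → ℝ → ℝ) (x t : ℝ) : ℝ := deriv (fun x' => f x' t) x

/-- Interface heights `z_{α+1/2} = z_b + Σ_{j=1}^α l_j H`. -/
noncomputable def zhalf (zb : ℝ → ℝ) (H : ℝ → ℝ → ℝ) (l : ℕ → ℝ) (α : ℕ) (x t : ℝ) : ℝ :=
  zb x + ∑ j ∈ Finset.Icc 1 α, l j * H x t

/-- Layer midpoints `z_α = (z_{α+1/2} + z_{α−1/2})/2`. -/
noncomputable def zc (zb : ℝ → ℝ) (H : ℝ → ℝ → ℝ) (l : ℕ → ℝ) (α : ℕ) (x t : ℝ) : ℝ :=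
  (zhalf zb H l α x t + zhalf zb H l (α - 1) x t) / 2

/-- `c_b = 1/√(1+(∂_x z_b)²)`. -/
noncomputable def cbf (zb : ℝ → ℝ) (x : ℝ) : ℝ := 1 / Real.sqrt (1 + (deriv zb x) ^ 2)

private lemma tele_aux (f : ℕ → ℝ) (n : ℕ) :
    ∑ α ∈ Finset.Icc 1 n, (f (α - 1) - f α) = f 0 - f n := by
  induction n with
  | zero => simp
  | succ n ih =>
    rw [Finset.sum_Icc_succ_top (by omega : 1 ≤ n + 1), ih]
    simp only [Nat.add_sub_cancel]
    ring

/-- with layer stresses defined through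
`h_α Σ_{xx,α} = 2μ( h_α ∂_x u_α − ( ∂_x z_{α+1/2}(u_{α+1}−u_α)/2 + ∂_x z_{α−1/2}(u_α−u_{α−1})/2 ))`,
`h_α Σ_{zx,α} = μ( h_α ∂_x w_α + h_α ∂_x z_α ∂_x u_α + ((u_{α+1}−u_α)/2)(1−(∂_x z_{α+1/2})²) + ((u_α−u_{α−1})/2)(1−(∂_x z_{α−1/2})²))`,
and interface stresses given by centred averages, the dissipation `R_E` equals
`−Σ_{α=1}^N (h_α/μ)(Σ_{xx,α}² + Σ_{zx,α}²) − (κ/c_b³)u_1² ≤ 0`. -/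
theorem stmt17 (N : ℕ) (hN : 1 ≤ N) (l : ℕ → ℝ)
    (hl : ∀ j ∈ Finset.Icc 1 N, 0 < l j) (hlsum : ∑ j ∈ Finset.Icc 1 N, l j = 1)
    (μ κ : ℝ) (hμ : 0 < μ) (hκ : 0 ≤ κ)
    (zb : ℝ → ℝ) (H : ℝ → ℝ → ℝ)
    (hzb : ContDiff ℝ (⊤ : ℕ∞) zb)
    (hH : ContDiff ℝ (⊤ : ℕ∞) (fun q : ℝ × ℝ => H q.1 q.2))
    (hHpos : ∀ x t : ℝ, 0 < H x t)
    (u w : ℕ → ℝ → ℝ → ℝ)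
    (hu : ∀ α, ContDiff ℝ (⊤ : ℕ∞) (fun q : ℝ × ℝ => u α q.1 q.2))
    (hw : ∀ α, ContDiff ℝ (⊤ : ℕ∞) (fun q : ℝ × ℝ => w α q.1 q.2))
    -- boundary conventions
    (hu0 : u 0 = u 1) (huN : u (N + 1) = u N)
    -- layer stresses
    (Sxxl Szxl : ℕ → ℝ → ℝ → ℝ)
    (hSxxl : ∀ α ∈ Finset.Icc 1 N, ∀ x t : ℝ,
      l α * H x t * Sxxl α x t
        = 2 * μ * (l α * H x t * pdx (u α) x t
            - (pdx (zhalf zb H l α) x t * (u (α + 1) x t - u α x t) / 2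
              + pdx (zhalf zb H l (α - 1)) x t * (u α x t - u (α - 1) x t) / 2)))
    (hSzxl : ∀ α ∈ Finset.Icc 1 N, ∀ x t : ℝ,
      l α * H x t * Szxl α x t
        = μ * (l α * H x t * pdx (w α) x t
            + l α * H x t * pdx (zc zb H l α) x t * pdx (u α) x t
            + (u (α + 1) x t - u α x t) / 2 * (1 - (pdx (zhalf zb H l α) x t) ^ 2)
            + (u α x t - u (α - 1) x t) / 2 * (1 - (pdx (zhalf zb H l (α - 1)) x t) ^ 2)))
    -- conventions Σ_{ab,0} = Σ_{ab,1} and Σ_{ab,N+1} = Σ_{ab,N}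
    (hSxxl0 : Sxxl 0 = Sxxl 1) (hSxxlN : Sxxl (N + 1) = Sxxl N)
    (hSzxl0 : Szxl 0 = Szxl 1) (hSzxlN : Szxl (N + 1) = Szxl N)
    -- interface stresses: centred averages of the layer stresses
    (Sxxh Szxh : ℕ → ℝ → ℝ → ℝ)
    (hSxxh : ∀ α ∈ Finset.Icc 0 N, ∀ x t : ℝ,
      Sxxh α x t = (Sxxl (α + 1) x t + Sxxl α x t) / 2)
    (hSzxh : ∀ α ∈ Finset.Icc 0 N, ∀ x t : ℝ,
      Szxh α x t = (Szxl (α + 1) x t + Szxl α x t) / 2) :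
    ∀ x t : ℝ,
      (-(∑ α ∈ Finset.Icc 1 N,
            (2 * pdx (u α) x t * (l α * H x t * Sxxl α x t)
              - 2 * Sxxh α x t * (u (α + 1) x t - u α x t) * pdx (zhalf zb H l α) x t
              + (pdx (w α) x t + pdx (zc zb H l α) x t * pdx (u α) x t)
                  * (l α * H x t * Szxl α x t)
              + Szxh α x t * (u (α + 1) x t - u α x t)
                  * (1 - (pdx (zhalf zb H l α) x t) ^ 2)))
          - κ / (cbf zb x) ^ 3 * (u 1 x t) ^ 2
        = -(∑ α ∈ Finset.Icc 1 N,
              (l α * H x t / μ) * ((Sxxl α x t) ^ 2 + (Szxl α x t) ^ 2))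
          - κ / (cbf zb x) ^ 3 * (u 1 x t) ^ 2)
      ∧ (-(∑ α ∈ Finset.Icc 1 N,
            (2 * pdx (u α) x t * (l α * H x t * Sxxl α x t)
              - 2 * Sxxh α x t * (u (α + 1) x t - u α x t) * pdx (zhalf zb H l α) x t
              + (pdx (w α) x t + pdx (zc zb H l α) x t * pdx (u α) x t)
                  * (l α * H x t * Szxl α x t)
              + Szxh α x t * (u (α + 1) x t - u α x t)
                  * (1 - (pdx (zhalf zb H l α) x t) ^ 2)))
          - κ / (cbf zb x) ^ 3 * (u 1 x t) ^ 2 ≤ 0) := by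
  intro x t
  obtain ⟨f, hf⟩ : ∃ f : ℕ → ℝ, ∀ β : ℕ,
      f β = Sxxl (β + 1) x t * pdx (zhalf zb H l β) x t * (u (β + 1) x t - u β x t)
        - Szxl (β + 1) x t / 2 * (u (β + 1) x t - u β x t)
            * (1 - (pdx (zhalf zb H l β) x t) ^ 2) :=
    ⟨_, fun β => rfl⟩
  have key : ∀ α ∈ Finset.Icc 1 N,
      (2 * pdx (u α) x t * (l α * H x t * Sxxl α x t)
        - 2 * Sxxh α x t * (u (α + 1) x t - u α x t) * pdx (zhalf zb H l α) x t
        + (pdx (w α) x t + pdx (zc zb H l α) x t * pdx (u α) x t)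
            * (l α * H x t * Szxl α x t)
        + Szxh α x t * (u (α + 1) x t - u α x t)
            * (1 - (pdx (zhalf zb H l α) x t) ^ 2))
      = (l α * H x t / μ) * ((Sxxl α x t) ^ 2 + (Szxl α x t) ^ 2)
          + (f (α - 1) - f α) := by
    intro α hα
    obtain ⟨h1, h2⟩ := Finset.mem_Icc.mp hα
    have hsub : α - 1 + 1 = α := Nat.succ_pred_eq_of_pos h1
    have hx := hSxxl α hα x t
    have hz := hSzxl α hα x t
    have hm0 : α ∈ Finset.Icc 0 N := Finset.mem_Icc.mpr ⟨Nat.zero_le _, h2⟩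
    rw [hSxxh α hm0 x t, hSzxh α hm0 x t, hf, hf, hsub]
    have hμne : μ ≠ 0 := ne_of_gt hμ
    field_simp
    linear_combination (-2 * Sxxl α x t) * hx + (-2 * Szxl α x t) * hz
  have h0 : f 0 = 0 := by
    rw [hf, hu0]; norm_num
  have hN0 : f N = 0 := by
    rw [hf, huN]; ring
  have tele : ∑ α ∈ Finset.Icc 1 N, (f (α - 1) - f α) = 0 := by
    rw [tele_aux f N, h0, hN0, sub_zero]
  have main : ∑ α ∈ Finset.Icc 1 N,
      (2 * pdx (u α) x t * (l α * H x t * Sxxl α x t)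
        - 2 * Sxxh α x t * (u (α + 1) x t - u α x t) * pdx (zhalf zb H l α) x t
        + (pdx (w α) x t + pdx (zc zb H l α) x t * pdx (u α) x t)
            * (l α * H x t * Szxl α x t)
        + Szxh α x t * (u (α + 1) x t - u α x t)
            * (1 - (pdx (zhalf zb H l α) x t) ^ 2))
      = ∑ α ∈ Finset.Icc 1 N,
          (l α * H x t / μ) * ((Sxxl α x t) ^ 2 + (Szxl α x t) ^ 2) := by
    rw [Finset.sum_congr rfl key, Finset.sum_add_distrib, tele, add_zero]
  have hcb : 0 < cbf zb x := by
    unfold cbf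
    positivity
  have hK : 0 ≤ κ / (cbf zb x) ^ 3 * (u 1 x t) ^ 2 :=
    mul_nonneg (div_nonneg hκ (pow_nonneg hcb.le 3)) (sq_nonneg _)
  have hS : 0 ≤ ∑ α ∈ Finset.Icc 1 N,
      (l α * H x t / μ) * ((Sxxl α x t) ^ 2 + (Szxl α x t) ^ 2) := by
    refine Finset.sum_nonneg fun α hα => ?_
    have hlα := hl α hα
    have hHx := hHpos x t
    positivity
  refine ⟨by rw [main], ?_⟩
  rw [main]
  linarith
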